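/- For every β > 0, the ratio K(2n)/K(n) converges to 1 as n → ∞, where K(n) = (√(R(n)) + √(R(n)−4))²/4 with R(n) = (L1(n+1,1/n)+L3(n+1,1/n))² / (L1(n+1,1/n)·L3(n+1,1/n) − L2(n+1,1/n)²) is the condition number of the Fisher information matrix corresponding to the equidistant design ξ_n = {0, 1/n, 2/n, …, 1} on [0,1]. -/

import Mathlib

open Real Filter

/-- Entry `L1` of the Fisher information matrix for an equidistant design with
`n` points and step size `d`, covariance parameter `β`. -/
noncomputable def L1 (β : ℝ) (n : ℕ) (d : ℝ) : ℝ :=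
  (2 - (n : ℝ) + n * exp (β * d)) / (exp (β * d) + 1)

/-- Entry `L2` of the Fisher information matrix. -/
noncomputable def L2 (β : ℝ) (n : ℕ) (d : ℝ) : ℝ :=
  d * ((n : ℝ) - 1) / 2 * L1 β n d

/-- Entry `L3` of the Fisher information matrix. -/
noncomputable def L3 (β : ℝ) (n : ℕ) (d : ℝ) : ℝ :=
  d ^ 2 * ((n : ℝ) - 1) / (exp (2 * β * d) - 1) *
    ((n : ℝ) * (2 * n - 1) * (exp (β * d) - 1) ^ 2 / 6 + n * (exp (β * d) - 1) + 1)
/-- The quantity `R(n) = (L1+L3)²/(L1·L3 − L2²)` for the equidistant design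
`ξ_n = {0, 1/n, …, 1}` on `[0,1]` (`n+1` points with step `1/n`). -/
noncomputable def Rn (β : ℝ) (n : ℕ) : ℝ :=
  (L1 β (n + 1) (1 / n) + L3 β (n + 1) (1 / n)) ^ 2 /
    (L1 β (n + 1) (1 / n) * L3 β (n + 1) (1 / n) - L2 β (n + 1) (1 / n) ^ 2)

/-- The condition number `K(n) = (√R(n) + √(R(n)−4))²/4` of the Fisher
information matrix for the design `ξ_n`. -/
noncomputable def Kn (β : ℝ) (n : ℕ) : ℝ :=
  (Real.sqrt (Rn β n) + Real.sqrt (Rn β n - 4)) ^ 2 / 4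

lemma aux_exp (c : ℝ) (hc : c ≠ 0) :
    Tendsto (fun n : ℕ => (n : ℝ) * (Real.exp (c / n) - 1)) atTop (nhds c) := by
  have h1 : Tendsto (fun x : ℝ => (Real.exp x - 1) / x) (nhdsWithin 0 {0}ᶜ) (nhds 1) := by
    have h := Real.hasDerivAt_exp 0
    rw [hasDerivAt_iff_tendsto_slope] at h
    simpa [slope_fun_def, Real.exp_zero, div_eq_inv_mul] using h
  have h0 : Tendsto (fun n : ℕ => c / (n : ℝ)) atTop (nhds 0) :=
    tendsto_const_div_atTop_nhds_zero_nat c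
  have h2 : Tendsto (fun n : ℕ => c / (n : ℝ)) atTop (nhdsWithin 0 {0}ᶜ) := by
    refine tendsto_nhdsWithin_of_tendsto_nhds_of_eventually_within _ h0 ?_
    filter_upwards [eventually_ge_atTop 1] with n hn
    have hn' : (n : ℝ) ≠ 0 := by positivity
    simp [div_ne_zero hc hn']
  have h3 := (h1.comp h2).const_mul c
  rw [mul_one] at h3
  refine h3.congr' ?_
  filter_upwards [eventually_ge_atTop 1] with n hn
  have hn' : (n : ℝ) ≠ 0 := by positivity
  simp only [Function.comp_apply]
  field_simp

/-- Doubling the number of sub-intervals of a fixed design interval has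
asymptotically no effect on the condition number: `K(2n)/K(n) → 1`. -/
theorem K_double_ratio_tendsto_one (β : ℝ) (hβ : 0 < β) :
    Tendsto (fun n : ℕ => Kn β (2 * n) / Kn β n) atTop (nhds 1) := by
  -- limits of building blocks
  have hu : Tendsto (fun n : ℕ => (n : ℝ) * (Real.exp (β / n) - 1)) atTop (nhds β) :=
    aux_exp β hβ.ne'
  have hv : Tendsto (fun n : ℕ => (n : ℝ) * (Real.exp (2 * β / n) - 1)) atTop (nhds (2 * β)) :=
    aux_exp (2 * β) (by positivity)
  have h0 : Tendsto (fun n : ℕ => β / (n : ℝ)) atTop (nhds 0) :=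
    tendsto_const_div_atTop_nhds_zero_nat β
  have hw : Tendsto (fun n : ℕ => Real.exp (β / n)) atTop (nhds 1) := by
    have := (Real.continuous_exp.tendsto 0).comp h0
    simpa [Function.comp_def] using this
  set a : ℝ := (β + 2) / 2 with ha_def
  set c : ℝ := (β ^ 2 / 3 + β + 1) / (2 * β) with hc_def
  have ha : 0 < a := by positivity
  have hc : 0 < c := by positivity
  -- limit of L1
  have hL1 : Tendsto (fun n : ℕ => L1 β (n + 1) (1 / n)) atTop (nhds a) := by
    have hden : (1 : ℝ) + 1 ≠ 0 := by norm_num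
    have h := (((hu.add hw).add (tendsto_const_nhds : Tendsto (fun _ : ℕ => (1:ℝ)) atTop (nhds 1))).div
      (hw.add (tendsto_const_nhds : Tendsto (fun _ : ℕ => (1:ℝ)) atTop (nhds 1))) (by norm_num))
    have heq : a = (β + 1 + 1) / (1 + 1) := by rw [ha_def]; ring
    rw [heq]
    refine h.congr' ?_
    filter_upwards [eventually_ge_atTop 1] with n hn
    have hn' : (n : ℝ) ≠ 0 := by positivity
    have he : Real.exp (β * (1 / n)) = Real.exp (β / n) := by rw [mul_one_div]
    have hne : Real.exp (β / n) + 1 ≠ 0 := by positivity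
    simp only [L1, he, Pi.div_apply]
    push_cast
    field_simp
    ring
  -- limit of L3
  have hL3 : Tendsto (fun n : ℕ => L3 β (n + 1) (1 / n)) atTop (nhds c) := by
    have hS : Tendsto (fun n : ℕ =>
        ((2 * ((n : ℝ) * (Real.exp (β / n) - 1)) ^ 2
          + 3 * ((n : ℝ) * (Real.exp (β / n) - 1)) * (Real.exp (β / n) - 1)
          + (Real.exp (β / n) - 1) ^ 2) / 6
          + (n : ℝ) * (Real.exp (β / n) - 1) + (Real.exp (β / n) - 1) + 1))
        atTop (nhds (β ^ 2 / 3 + β + 1)) := by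
      have hw1 : Tendsto (fun n : ℕ => Real.exp (β / n) - 1) atTop (nhds 0) := by
        simpa using hw.sub (tendsto_const_nhds : Tendsto (fun _ : ℕ => (1:ℝ)) atTop (nhds 1))
      have h := ((((hu.pow 2).const_mul 2).add ((hu.const_mul 3).mul hw1)).add
          (hw1.pow 2)).div_const 6 |>.add hu |>.add hw1 |>.add
          (tendsto_const_nhds : Tendsto (fun _ : ℕ => (1:ℝ)) atTop (nhds 1))
      convert h using 2
      ring
    have h := hS.div hv (by positivity)
    have heq : c = (β ^ 2 / 3 + β + 1) / (2 * β) := hc_def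
    rw [heq]
    refine h.congr' ?_
    filter_upwards [eventually_ge_atTop 1] with n hn
    have hn' : (n : ℝ) ≠ 0 := by positivity
    have hx : 0 < 2 * β / n := by positivity
    have hE2 : Real.exp (2 * β * (1 / n)) - 1 ≠ 0 := by
      have : 1 < Real.exp (2 * β * (1 / n)) := by
        calc (1:ℝ) = Real.exp 0 := Real.exp_zero.symm
        _ < Real.exp (2 * β * (1 / n)) := Real.exp_lt_exp.mpr (by rw [mul_one_div]; positivity)
      linarith
    have he : Real.exp (β * (1 / n)) = Real.exp (β / n) := by rw [mul_one_div]
    have he2 : Real.exp (2 * β * (1 / n)) = Real.exp (2 * β / n) := by rw [mul_one_div]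
    simp only [L3, he, Pi.div_apply]
    rw [he2] at hE2 ⊢
    push_cast
    field_simp
    ring
  -- limit of Rn
  set D : ℝ := a * c - (a / 2) ^ 2 with hD_def
  have hD : 0 < D := by
    rw [hD_def, ha_def, hc_def]
    rw [div_pow, sub_pos]
    rw [div_mul_div_comm, div_lt_div_iff₀ (by norm_num) (by positivity)]
    nlinarith [sq_nonneg β, hβ]
  set R : ℝ := (a + c) ^ 2 / D with hR_def
  have hR4 : 4 < R := by
    rw [hR_def, lt_div_iff₀ hD, hD_def]
    nlinarith [sq_nonneg (a - c), ha]
  have hR : Tendsto (fun n : ℕ => Rn β n) atTop (nhds R) := by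
    have h := ((hL1.add hL3).pow 2).div
      ((hL1.mul hL3).sub ((hL1.div_const 2).pow 2)) (by rw [← hD_def]; exact hD.ne')
    rw [hR_def, hD_def]
    refine h.congr' ?_
    filter_upwards [eventually_ge_atTop 1] with n hn
    have hn' : (n : ℝ) ≠ 0 := by positivity
    have hL2 : L2 β (n + 1) (1 / n) = L1 β (n + 1) (1 / n) / 2 := by
      simp only [L2]
      push_cast
      field_simp
      ring
    simp only [Rn, hL2, Pi.div_apply]
  -- limit of Kn
  set K : ℝ := (Real.sqrt R + Real.sqrt (R - 4)) ^ 2 / 4 with hK_def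
  have hK : Tendsto (fun n : ℕ => Kn β n) atTop (nhds K) := by
    have h1 : Tendsto (fun n : ℕ => Real.sqrt (Rn β n)) atTop (nhds (Real.sqrt R)) :=
      (Real.continuous_sqrt.tendsto _).comp hR
    have h2 : Tendsto (fun n : ℕ => Real.sqrt (Rn β n - 4)) atTop (nhds (Real.sqrt (R - 4))) :=
      (Real.continuous_sqrt.tendsto _).comp (hR.sub tendsto_const_nhds)
    exact ((h1.add h2).pow 2).div_const 4
  have hKpos : 0 < K := by
    rw [hK_def]
    have h1 : 0 < Real.sqrt R := Real.sqrt_pos.mpr (by linarith)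
    have h2 : 0 ≤ Real.sqrt (R - 4) := Real.sqrt_nonneg _
    positivity
  have h2n : Tendsto (fun n : ℕ => 2 * n) atTop atTop := by
    apply tendsto_atTop_atTop.2
    exact fun b => ⟨b, fun a ha => by omega⟩
  have hfin := (hK.comp h2n).div hK hKpos.ne'
  rw [div_self hKpos.ne'] at hfin
  exact hfin
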